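/- arXiv:1908.02713 — 4 statements merged into one kernel-verified Lean document; each statement's English description precedes it below -/
import Mathlib

section
/- Let T = Σ_{j,k,ℓ ∈ {x,y,z}} ε_{jkℓ} s_j ⊗ s_k ⊗ s_ℓ on (ℂ²)^⊗3, and let τ_y = I/2 + s_y and τ_z = I/2 + s_z. Then for every 2×2 complex matrix ρ, the partial trace over the second and third tensor factors satisfies Tr_R[T, ρ ⊗ τ_y ⊗ τ_z] = (1/4)[s_x, ρ]. Equivalently, for every 2×2 matrix A, Tr[(A ⊗ I ⊗ I) · [T, ρ ⊗ τ_y ⊗ τ_z]] = (1/4) Tr[A [s_x, ρ]]. -/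
open Matrix Kronecker
open scoped ComplexOrder

noncomputable section

/-- Pauli matrices -/
def σx : Matrix (Fin 2) (Fin 2) ℂ := !![0, 1; 1, 0]
def σy : Matrix (Fin 2) (Fin 2) ℂ := !![0, -Complex.I; Complex.I, 0]
def σz : Matrix (Fin 2) (Fin 2) ℂ := !![1, 0; 0, -1]

/-- spin operators `s_x, s_y, s_z` (with ℏ = 1), indexed by `0 = x`, `1 = y`, `2 = z`. -/
def spin : Fin 3 → Matrix (Fin 2) (Fin 2) ℂ := fun j => (2 : ℂ)⁻¹ • (![σx, σy, σz] j)

/-- Levi-Civita symbol on indices `0,1,2` (i.e. `x,y,z`). -/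
def εLC (j k l : Fin 3) : ℂ :=
  ((((k : ℤ) - (j : ℤ)) * (((l : ℤ) - (j : ℤ)) * ((l : ℤ) - (k : ℤ))) : ℤ) : ℂ) / 2

/-- The rotationally invariant 3-qubit interaction `T = Σ ε_{jkl} s_j ⊗ s_k ⊗ s_l`. -/
def T : Matrix ((Fin 2 × Fin 2) × Fin 2) ((Fin 2 × Fin 2) × Fin 2) ℂ :=
  ∑ j : Fin 3, ∑ k : Fin 3, ∑ l : Fin 3, εLC j k l • (spin j ⊗ₖ spin k ⊗ₖ spin l)

/-- Total spin component `S_k^tot` on three qubits. -/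
def Stot (k : Fin 3) : Matrix ((Fin 2 × Fin 2) × Fin 2) ((Fin 2 × Fin 2) × Fin 2) ℂ :=
  spin k ⊗ₖ (1 : Matrix (Fin 2) (Fin 2) ℂ) ⊗ₖ (1 : Matrix (Fin 2) (Fin 2) ℂ)
    + (1 : Matrix (Fin 2) (Fin 2) ℂ) ⊗ₖ spin k ⊗ₖ (1 : Matrix (Fin 2) (Fin 2) ℂ)
    + (1 : Matrix (Fin 2) (Fin 2) ℂ) ⊗ₖ (1 : Matrix (Fin 2) (Fin 2) ℂ) ⊗ₖ spin k

/-- `τ_j = I/2 + s_j`, the density matrix of a spin-1/2 particle polarized in the `+j` direction. -/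
def τ (j : Fin 3) : Matrix (Fin 2) (Fin 2) ℂ := (2 : ℂ)⁻¹ • 1 + spin j

/-- Partial trace over the second and third tensor factors. -/
def ptraceR (M : Matrix ((Fin 2 × Fin 2) × Fin 2) ((Fin 2 × Fin 2) × Fin 2) ℂ) :
    Matrix (Fin 2) (Fin 2) ℂ :=
  Matrix.of fun i j => ∑ b : Fin 2, ∑ c : Fin 2, M ((i, b), c) ((j, b), c)

/-- Trace norm `‖A‖₁ = Tr √(A†A)`. -/
def traceNorm {n : Type*} [Fintype n] [DecidableEq n] (A : Matrix n n ℂ) : ℝ :=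
  (((Matrix.posSemidef_conjTranspose_mul_self A).1.eigenvectorUnitary.1 *
      diagonal ((fun x : ℝ => (x : ℂ)) ∘ (fun x => √x) ∘
        (Matrix.posSemidef_conjTranspose_mul_self A).1.eigenvalues) *
      (star (Matrix.posSemidef_conjTranspose_mul_self A).1.eigenvectorUnitary :
        Matrix n n ℂ)).trace).re



lemma hT6 : T = (8:ℂ)⁻¹ • (σx ⊗ₖ σy ⊗ₖ σz + σz ⊗ₖ σx ⊗ₖ σy + σy ⊗ₖ σz ⊗ₖ σx
    - σx ⊗ₖ σz ⊗ₖ σy - σy ⊗ₖ σx ⊗ₖ σz - σz ⊗ₖ σy ⊗ₖ σx) := by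
  simp only [T, Fin.sum_univ_three, εLC, spin, Matrix.cons_val_zero, Matrix.cons_val_one,
    Matrix.head_cons, Matrix.cons_val_two, Matrix.tail_cons, Matrix.smul_kronecker,
    Matrix.kronecker_smul]
  norm_num
  module

set_option maxHeartbeats 1600000 in
/-- `Tr_R [T, ρ ⊗ τ_y ⊗ τ_z] = (1/4)[s_x, ρ]`, and the equivalent statement in terms of
expectation values of system observables. -/
theorem ptrace_commutator_T (ρ : Matrix (Fin 2) (Fin 2) ℂ) :
    ptraceR (T * (ρ ⊗ₖ τ 1 ⊗ₖ τ 2) - (ρ ⊗ₖ τ 1 ⊗ₖ τ 2) * T) =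
      (4 : ℂ)⁻¹ • (spin 0 * ρ - ρ * spin 0) ∧
    ∀ A : Matrix (Fin 2) (Fin 2) ℂ,
      ((A ⊗ₖ (1 : Matrix (Fin 2) (Fin 2) ℂ) ⊗ₖ (1 : Matrix (Fin 2) (Fin 2) ℂ)) *
          (T * (ρ ⊗ₖ τ 1 ⊗ₖ τ 2) - (ρ ⊗ₖ τ 1 ⊗ₖ τ 2) * T)).trace =
        (4 : ℂ)⁻¹ * (A * (spin 0 * ρ - ρ * spin 0)).trace := by
  have hmain : ptraceR (T * (ρ ⊗ₖ τ 1 ⊗ₖ τ 2) - (ρ ⊗ₖ τ 1 ⊗ₖ τ 2) * T) =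
      (4 : ℂ)⁻¹ • (spin 0 * ρ - ρ * spin 0) := by
    rw [hT6]
    ext i j
    fin_cases i <;> fin_cases j <;>
      simp [ptraceR, τ, spin, σx, σy, σz, Matrix.mul_apply, Fintype.sum_prod_type,
        Fin.sum_univ_succ, Matrix.one_apply, Matrix.vecMul, dotProduct,
        Complex.I_mul_I] <;> (ring_nf; simp [Complex.I_sq]; try ring)
  refine ⟨hmain, fun A => ?_⟩
  have hkey : ∀ M : Matrix ((Fin 2 × Fin 2) × Fin 2) ((Fin 2 × Fin 2) × Fin 2) ℂ,
      ((A ⊗ₖ (1 : Matrix (Fin 2) (Fin 2) ℂ) ⊗ₖ (1 : Matrix (Fin 2) (Fin 2) ℂ)) * M).trace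
        = (A * ptraceR M).trace := by
    intro M
    simp [Matrix.trace, Matrix.mul_apply, Matrix.kroneckerMap_apply, Matrix.one_apply,
      ptraceR, Matrix.diag, Fintype.sum_prod_type, Fin.sum_univ_succ]
    ring
  rw [hkey, hmain, Matrix.mul_smul, Matrix.trace_smul, smul_eq_mul]
end
end

section
/- Let A and B be elements of a complex Banach algebra (a complete normed ring in which the norm is submultiplicative). Then ‖ exp(A) B exp(−A) − B − [A, B] ‖ ≤ ‖B‖ (e^{2‖A‖} − 1 − 2‖A‖), where [A,B] = AB − BA. In particular, if moreover 2‖A‖ ≤ 1, then ‖ exp(A) B exp(−A) − B − [A, B] ‖ ≤ 4 (e − 2) ‖A‖² ‖B‖. -/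
open Nat Finset

lemma exp_tail_complex {𝔸 : Type*} [NormedRing 𝔸] [NormedAlgebra ℂ 𝔸]
    [CompleteSpace 𝔸] (x : 𝔸) :
    NormedSpace.exp x - 1 - x = ∑' n : ℕ, ((((n + 2)! : ℂ))⁻¹ • x ^ (n + 2)) := by
  have hs : Summable (fun n : ℕ => ((n ! : ℂ))⁻¹ • x ^ n) :=
    NormedSpace.expSeries_summable' (𝕂 := ℂ) x
  have h := Summable.sum_add_tsum_nat_add 2 hs
  simp only [NormedSpace.exp_eq_tsum ℂ]
  rw [← h]
  simp [Finset.sum_range_succ]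
  abel

lemma exp_tail_real (t : ℝ) :
    Real.exp t - 1 - t = ∑' n : ℕ, t ^ (n + 2) / (n + 2)! := by
  have hs : Summable (fun n : ℕ => t ^ n / n !) := Real.summable_pow_div_factorial t
  have h := Summable.sum_add_tsum_nat_add 2 hs
  simp only [Real.exp_eq_exp_ℝ, NormedSpace.exp_eq_tsum_div]
  rw [← h]
  simp [Finset.sum_range_succ]
  abel

lemma summable_tail_real (t : ℝ) : Summable (fun n : ℕ => t ^ (n + 2) / (n + 2)!) :=
  (summable_nat_add_iff 2).mpr (Real.summable_pow_div_factorial t)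

lemma norm_exp_sub_one_sub_le {𝔸 : Type*} [NormedRing 𝔸] [NormedAlgebra ℂ 𝔸]
    [CompleteSpace 𝔸] (x : 𝔸) :
    ‖NormedSpace.exp x - 1 - x‖ ≤ Real.exp ‖x‖ - 1 - ‖x‖ := by
  rw [exp_tail_complex, exp_tail_real]
  refine tsum_of_norm_bounded (summable_tail_real ‖x‖).hasSum fun n => ?_
  rw [norm_smul, norm_inv]
  have h1 : ‖(((n + 2)! : ℂ))‖ = ((n + 2)! : ℝ) := by
    simp
  rw [h1, div_eq_inv_mul]
  gcongr
  exact norm_pow_le' x (by positivity)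

lemma exp_quad_bound {t : ℝ} (ht0 : 0 ≤ t) (ht1 : t ≤ 1) :
    Real.exp t - 1 - t ≤ (Real.exp 1 - 2) * t ^ 2 := by
  have h1 : Real.exp 1 - 2 = ∑' n : ℕ, (1 : ℝ) ^ (n + 2) / (n + 2)! := by
    have := exp_tail_real 1
    linarith
  rw [exp_tail_real, h1, ← tsum_mul_right]
  refine Summable.tsum_le_tsum (fun n => ?_) (summable_tail_real t)
    ((summable_tail_real 1).mul_right _)
  rw [one_pow, div_mul_eq_mul_div, one_mul]
  have hle : t ^ (n + 2) ≤ t ^ 2 := pow_le_pow_of_le_one ht0 ht1 (by omega)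
  gcongr

/-- In a complex Banach algebra, `‖exp(A) B exp(-A) - B - [A,B]‖ ≤ ‖B‖(e^{2‖A‖} - 1 - 2‖A‖)`;
in particular, if `2‖A‖ ≤ 1` then this is at most `4(e-2)‖A‖²‖B‖`. -/
theorem conj_exp_first_order {𝔸 : Type*} [NormedRing 𝔸] [NormedAlgebra ℂ 𝔸]
    [CompleteSpace 𝔸] (A B : 𝔸) :
    ‖NormedSpace.exp A * B * NormedSpace.exp (-A) - B - (A * B - B * A)‖ ≤
      ‖B‖ * (Real.exp (2 * ‖A‖) - 1 - 2 * ‖A‖) ∧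
    (2 * ‖A‖ ≤ 1 →
      ‖NormedSpace.exp A * B * NormedSpace.exp (-A) - B - (A * B - B * A)‖ ≤
        4 * (Real.exp 1 - 2) * ‖A‖ ^ 2 * ‖B‖) := by
  set E := NormedSpace.exp A with hE
  set F := NormedSpace.exp (-A) with hF
  set a := ‖A‖ with ha
  set b := ‖B‖ with hb
  set r := Real.exp a - 1 - a with hr
  have h1 : ‖E - 1 - A‖ ≤ r := norm_exp_sub_one_sub_le A
  have h2 : ‖F - 1 + A‖ ≤ r := by
    have := norm_exp_sub_one_sub_le (-A)
    rw [sub_neg_eq_add, norm_neg] at this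
    exact this
  have hr0 : 0 ≤ r := by
    have := Real.add_one_le_exp a
    rw [hr]; linarith
  have ha0 : (0:ℝ) ≤ a := norm_nonneg A
  have hb0 : (0:ℝ) ≤ b := norm_nonneg B
  have nmul3 : ∀ x y z : 𝔸, ‖x * y * z‖ ≤ ‖x‖ * ‖y‖ * ‖z‖ := fun x y z =>
    (norm_mul_le _ _).trans (mul_le_mul_of_nonneg_right (norm_mul_le x y) (norm_nonneg z))
  have key : E * B * F - B - (A * B - B * A) =
      (E - 1 - A) * B * (F - 1 + A) + ((E - 1 - A) * B + ((E - 1 - A) * B * A * (-1) +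
        (B * (F - 1 + A) + (A * B * (F - 1 + A) + A * B * A * (-1))))) := by
    noncomm_ring
  have main : ‖E * B * F - B - (A * B - B * A)‖ ≤ b * (Real.exp (2 * a) - 1 - 2 * a) := by
    rw [key]
    have t1 : ‖(E - 1 - A) * B * (F - 1 + A)‖ ≤ r * b * r :=
      (nmul3 _ _ _).trans (by gcongr)
    have t2 : ‖(E - 1 - A) * B‖ ≤ r * b :=
      (norm_mul_le _ _).trans (by gcongr)
    have t3 : ‖(E - 1 - A) * B * A * (-1)‖ ≤ r * b * a := by
      rw [mul_neg_one, norm_neg]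
      exact (nmul3 _ _ _).trans (by gcongr)
    have t4 : ‖B * (F - 1 + A)‖ ≤ b * r :=
      (norm_mul_le _ _).trans (by gcongr)
    have t5 : ‖A * B * (F - 1 + A)‖ ≤ a * b * r :=
      (nmul3 _ _ _).trans (by gcongr)
    have t6 : ‖A * B * A * (-1)‖ ≤ a * b * a := by
      rw [mul_neg_one, norm_neg]
      exact nmul3 _ _ _
    have total : ‖(E - 1 - A) * B * (F - 1 + A) + ((E - 1 - A) * B + ((E - 1 - A) * B * A * (-1) +
        (B * (F - 1 + A) + (A * B * (F - 1 + A) + A * B * A * (-1)))))‖ ≤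
        r * b * r + (r * b + (r * b * a + (b * r + (a * b * r + a * b * a)))) := by
      refine (norm_add_le _ _).trans (add_le_add t1 ?_)
      refine (norm_add_le _ _).trans (add_le_add t2 ?_)
      refine (norm_add_le _ _).trans (add_le_add t3 ?_)
      refine (norm_add_le _ _).trans (add_le_add t4 ?_)
      exact (norm_add_le _ _).trans (add_le_add t5 t6)
    refine total.trans ?_
    have hexp : Real.exp (2 * a) = Real.exp a * Real.exp a := by
      rw [two_mul, Real.exp_add]
    rw [hexp, hr]
    nlinarith [sq_nonneg (Real.exp a - 1 - a)]
  refine ⟨main, fun h2a => ?_⟩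
  refine main.trans ?_
  have := exp_quad_bound (t := 2 * a) (by positivity) h2a
  calc b * (Real.exp (2 * a) - 1 - 2 * a) ≤ b * ((Real.exp 1 - 2) * (2 * a) ^ 2) := by
        gcongr
    _ = 4 * (Real.exp 1 - 2) * a ^ 2 * b := by ring
end

section
/- Let d ≥ 2 and K = d² − 1, and let O_0, …, O_{K−1} be nonzero Hermitian d×d complex matrices that are traceless (Tr O_k = 0 for all k) and pairwise Hilbert–Schmidt orthogonal (Tr(O_k O_ℓ) = 0 for k ≠ ℓ), so that together with the identity they form an operator basis of all d×d matrices. Define the totally antisymmetric operator T on the K-fold tensor power of ℂ^d by T = Σ_{π ∈ S_K} sgn(π) · O_{π(0)} ⊗ O_{π(1)} ⊗ … ⊗ O_{π(K−1)} (a matrix indexed by functions Fin K → Fin d, whose ((f),(g)) entry is Σ_π sgn(π) ∏_{r} (O_{π(r)})_{f(r), g(r)}). Then for every k ∈ {0, …, K−1}, T commutes with the extensive operator O_k^tot = Σ_{r=0}^{K−1} (the operator acting as O_k on tensor factor r and as the identity on all other factors): [O_k^tot, T] = 0. -/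
open Matrix

noncomputable section

/-- The totally antisymmetric operator
`T = Σ_{π ∈ S_K} sgn(π) O_{π(0)} ⊗ O_{π(1)} ⊗ ... ⊗ O_{π(K-1)}`
on the `K`-fold tensor power of `ℂ^d`, as a matrix indexed by `Fin K → Fin d`. -/
def antisymT (d K : ℕ) (O : Fin K → Matrix (Fin d) (Fin d) ℂ) :
    Matrix (Fin K → Fin d) (Fin K → Fin d) ℂ :=
  Matrix.of fun f g =>
    ∑ π : Equiv.Perm (Fin K), ((Equiv.Perm.sign π : ℤ) : ℂ) * ∏ r, (O (π r)) (f r) (g r)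

/-- The operator acting as `A` on tensor factor `r` and as the identity elsewhere. -/
def embedAt (d K : ℕ) (r : Fin K) (A : Matrix (Fin d) (Fin d) ℂ) :
    Matrix (Fin K → Fin d) (Fin K → Fin d) ℂ :=
  Matrix.of fun f g =>
    A (f r) (g r) * ∏ r' ∈ Finset.univ.erase r, (if f r' = g r' then (1 : ℂ) else 0)

namespace AntisymAux

open Finset

variable {d K : ℕ}

/-- Tensor product of `K` matrices, as a matrix indexed by `Fin K → Fin d`. -/
def tens (d K : ℕ) (X : Fin K → Matrix (Fin d) (Fin d) ℂ) :
    Matrix (Fin K → Fin d) (Fin K → Fin d) ℂ :=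
  Matrix.of fun f g => ∏ r, X r (f r) (g r)

lemma tens_apply (X : Fin K → Matrix (Fin d) (Fin d) ℂ) (f g : Fin K → Fin d) :
    tens d K X f g = ∏ r, X r (f r) (g r) := rfl

lemma tens_mul (X Y : Fin K → Matrix (Fin d) (Fin d) ℂ) :
    tens d K X * tens d K Y = tens d K (fun r => X r * Y r) := by
  ext f g
  show ∑ h : Fin K → Fin d, tens d K X f h * tens d K Y h g = ∏ r, (X r * Y r) (f r) (g r)
  simp only [tens_apply, Matrix.mul_apply]
  rw [Finset.prod_univ_sum, Fintype.piFinset_univ]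
  exact Finset.sum_congr rfl fun h _ => (Finset.prod_mul_distrib).symm

lemma tens_update_apply (X : Fin K → Matrix (Fin d) (Fin d) ℂ) (r : Fin K)
    (A : Matrix (Fin d) (Fin d) ℂ) (f g : Fin K → Fin d) :
    tens d K (Function.update X r A) f g
      = A (f r) (g r) * ∏ s ∈ univ.erase r, X s (f s) (g s) := by
  rw [tens_apply, ← Finset.mul_prod_erase univ _ (mem_univ r), Function.update_self]
  congr 1
  exact Finset.prod_congr rfl fun s hs => by
    rw [Function.update_of_ne (Finset.ne_of_mem_erase hs)]

lemma tens_sub_single (X Y : Fin K → Matrix (Fin d) (Fin d) ℂ) (r : Fin K)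
    (h : ∀ s, s ≠ r → X s = Y s) :
    tens d K X - tens d K Y = tens d K (Function.update X r (X r - Y r)) := by
  ext f g
  show tens d K X f g - tens d K Y f g = _
  rw [tens_update_apply, tens_apply, tens_apply,
    ← Finset.mul_prod_erase univ _ (mem_univ r), ← Finset.mul_prod_erase univ _ (mem_univ r)]
  have hY : ∏ s ∈ univ.erase r, Y s (f s) (g s) = ∏ s ∈ univ.erase r, X s (f s) (g s) :=
    Finset.prod_congr rfl fun s hs => by rw [h s (Finset.ne_of_mem_erase hs)]
  rw [hY, Matrix.sub_apply, sub_mul]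

lemma tens_update_sum {ι : Type*} [Fintype ι] (X : Fin K → Matrix (Fin d) (Fin d) ℂ)
    (r : Fin K) (c : ι → ℂ) (A : ι → Matrix (Fin d) (Fin d) ℂ) :
    tens d K (Function.update X r (∑ m, c m • A m))
      = ∑ m, c m • tens d K (Function.update X r (A m)) := by
  ext f g
  rw [Matrix.sum_apply]
  simp only [Matrix.smul_apply, tens_update_apply, Matrix.sum_apply, smul_eq_mul]
  rw [Finset.sum_mul]
  exact Finset.sum_congr rfl fun m _ => mul_assoc _ _ _

lemma trace_self_ne_zero {A : Matrix (Fin d) (Fin d) ℂ}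
    (hA : A.IsHermitian) (h0 : A ≠ 0) : (A * A).trace ≠ 0 := by
  have hAA : A * A = Aᴴ * A := by rw [hA.eq]
  rw [hAA]
  intro h
  apply h0
  have h1 : ∑ j : Fin d, ∑ i : Fin d, ((Complex.normSq (A i j) : ℝ) : ℂ) = 0 := by
    rw [← h]
    simp only [Matrix.trace, Matrix.diag, Matrix.mul_apply, Matrix.conjTranspose_apply,
      Complex.normSq_eq_conj_mul_self, RCLike.star_def]
  have h2 : ∑ j : Fin d, ∑ i : Fin d, Complex.normSq (A i j) = 0 := by
    exact_mod_cast h1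
  ext i j
  have h3 := (Finset.sum_eq_zero_iff_of_nonneg (fun j _ =>
    Finset.sum_nonneg fun i _ => Complex.normSq_nonneg _)).mp h2 j (mem_univ j)
  have h4 := (Finset.sum_eq_zero_iff_of_nonneg (fun i _ =>
    Complex.normSq_nonneg _)).mp h3 i (mem_univ i)
  simpa using Complex.normSq_eq_zero.mp h4

lemma exists_comm_coeffs (d : ℕ) (hd : 2 ≤ d)
    (O : Fin (d ^ 2 - 1) → Matrix (Fin d) (Fin d) ℂ)
    (hO0 : ∀ k, O k ≠ 0) (hherm : ∀ k, (O k).IsHermitian)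
    (htr : ∀ k, (O k).trace = 0)
    (horth : ∀ k l, k ≠ l → (O k * O l).trace = 0) (k : Fin (d ^ 2 - 1)) :
    ∃ c : Fin (d ^ 2 - 1) → Fin (d ^ 2 - 1) → ℂ,
      (∀ l, O k * O l - O l * O k = ∑ m, c l m • O m) ∧ (∀ l, c l l = 0) := by
  have hd0 : (0 : ℕ) < d := lt_of_lt_of_le (by norm_num) hd
  have hdC : (d : ℂ) ≠ 0 := Nat.cast_ne_zero.mpr hd0.ne'
  have htrsq : ∀ m, (O m * O m).trace ≠ 0 := fun m => trace_self_ne_zero (hherm m) (hO0 m)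
  set v : Option (Fin (d ^ 2 - 1)) → Matrix (Fin d) (Fin d) ℂ := fun i => i.elim 1 O with hv
  have hcard : Fintype.card (Option (Fin (d ^ 2 - 1)))
      = Module.finrank ℂ (Matrix (Fin d) (Fin d) ℂ) := by
    rw [Module.finrank_matrix]
    simp only [Fintype.card_option, Fintype.card_fin, Module.finrank_self, mul_one]
    rw [← pow_two]
    have : 1 ≤ d ^ 2 := Nat.one_le_pow _ _ hd0
    omega
  have hli : LinearIndependent ℂ v := by
    rw [Fintype.linearIndependent_iff]
    intro a ha
    have hsome : ∀ m, a (some m) = 0 := by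
      intro m
      have h1 : ((∑ i, a i • v i) * O m).trace = 0 := by rw [ha, zero_mul, trace_zero]
      rw [Finset.sum_mul] at h1
      simp only [smul_mul_assoc, trace_sum, trace_smul, smul_eq_mul] at h1
      rw [Finset.sum_eq_single (some m)] at h1
      · exact (mul_eq_zero.mp h1).resolve_right (htrsq m)
      · intro i _ hne
        match i with
        | none => simp only [hv, Option.elim, one_mul]; rw [htr m, mul_zero]
        | some j =>
          have hjm : j ≠ m := fun hjm => hne (by rw [hjm])
          simp only [hv, Option.elim]; rw [horth j m hjm, mul_zero]
      · intro hmem; exact absurd (mem_univ _) hmem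
    intro i
    match i with
    | some m => exact hsome m
    | none =>
      have h1 : (∑ i, a i • v i).trace = 0 := by rw [ha, trace_zero]
      rw [trace_sum] at h1
      simp only [trace_smul, smul_eq_mul] at h1
      rw [Fintype.sum_option] at h1
      simp only [hsome, zero_mul, Finset.sum_const_zero, add_zero] at h1
      have h2 : a none * d = 0 := by
        simpa only [hv, Option.elim, Matrix.trace_one, Fintype.card_fin] using h1
      exact (mul_eq_zero.mp h2).resolve_right hdC
  let B := basisOfLinearIndependentOfCardEqFinrank hli hcard
  have hB : ⇑B = v := coe_basisOfLinearIndependentOfCardEqFinrank hli hcard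
  set C : Fin (d ^ 2 - 1) → Matrix (Fin d) (Fin d) ℂ :=
    fun l => O k * O l - O l * O k with hCdef
  have hrepr : ∀ l, C l = B.repr (C l) none • (1 : Matrix (Fin d) (Fin d) ℂ)
      + ∑ m, B.repr (C l) (some m) • O m := by
    intro l
    conv_lhs => rw [← B.sum_repr (C l)]
    rw [hB, Fintype.sum_option]
    rfl
  have htrC : ∀ l, (C l).trace = 0 := by
    intro l
    rw [hCdef]
    simp only [trace_sub]
    rw [trace_mul_comm, sub_self]
  have hnone : ∀ l, B.repr (C l) none = 0 := by
    intro l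
    have h1 := htrC l
    rw [hrepr l] at h1
    rw [trace_add, trace_smul, trace_sum] at h1
    simp only [trace_smul, htr, smul_zero, Finset.sum_const_zero, add_zero,
      Matrix.trace_one, Fintype.card_fin, smul_eq_mul, mul_zero] at h1
    exact (mul_eq_zero.mp h1).resolve_right hdC
  have hc : ∀ l, C l = ∑ m, B.repr (C l) (some m) • O m := by
    intro l
    have h := hrepr l
    rw [hnone l, zero_smul, zero_add] at h
    exact h
  refine ⟨fun l m => B.repr (C l) (some m), hc, fun l => ?_⟩
  have h2 : (C l * O l).trace = 0 := by
    rw [hCdef]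
    simp only [sub_mul, trace_sub]
    rw [sub_eq_zero]
    exact trace_mul_cycle (O k) (O l) (O l)
  have h3 : (C l * O l).trace = B.repr (C l) (some l) * (O l * O l).trace := by
    conv_lhs => rw [hc l]
    rw [Finset.sum_mul, trace_sum]
    simp only [smul_mul_assoc, trace_smul, smul_eq_mul]
    rw [Finset.sum_eq_single l]
    · intro m _ hml; rw [horth m l hml, mul_zero]
    · intro hmem; exact absurd (mem_univ _) hmem
  rw [h2] at h3
  exact ((mul_eq_zero.mp h3.symm).resolve_right (htrsq l))


lemma embedAt_eq (r : Fin K) (A : Matrix (Fin d) (Fin d) ℂ) :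
    embedAt d K r A
      = tens d K (Function.update (fun _ => (1 : Matrix (Fin d) (Fin d) ℂ)) r A) := by
  ext f g
  rw [tens_update_apply]
  show A (f r) (g r) * ∏ r' ∈ univ.erase r, (if f r' = g r' then (1:ℂ) else 0) = _
  congr 1

lemma antisymT_eq (O : Fin K → Matrix (Fin d) (Fin d) ℂ) :
    antisymT d K O = ∑ π : Equiv.Perm (Fin K),
      ((Equiv.Perm.sign π : ℤ) : ℂ) • tens d K (O ∘ ⇑π) := by
  ext f g
  simp only [antisymT, Matrix.of_apply, Matrix.sum_apply, Matrix.smul_apply, tens_apply,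
    smul_eq_mul, Function.comp_apply]

end AntisymAux

open AntisymAux Finset

/-- For any family of nonzero Hermitian, traceless, pairwise Hilbert-Schmidt orthogonal
`d×d` matrices `O_0, ..., O_{K-1}` with `K = d² - 1`, the totally antisymmetric operator `T`
commutes with every extensive operator `O_k^tot = Σ_r O_k^{(r)}`. -/
theorem antisymT_commutes_with_extensive (d : ℕ) (hd : 2 ≤ d)
    (O : Fin (d ^ 2 - 1) → Matrix (Fin d) (Fin d) ℂ)
    (hO0 : ∀ k, O k ≠ 0) (hherm : ∀ k, (O k).IsHermitian)
    (htr : ∀ k, (O k).trace = 0)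
    (horth : ∀ k l, k ≠ l → (O k * O l).trace = 0) (k : Fin (d ^ 2 - 1)) :
    (∑ r, embedAt d (d ^ 2 - 1) r (O k)) * antisymT d (d ^ 2 - 1) O =
      antisymT d (d ^ 2 - 1) O * (∑ r, embedAt d (d ^ 2 - 1) r (O k)) := by
  obtain ⟨c, hc, hcz⟩ := exists_comm_coeffs d hd O hO0 hherm htr horth k
  rw [← sub_eq_zero]
  -- commutator of one embedded factor with one tensor term
  have key : ∀ (r : Fin (d ^ 2 - 1)) (π : Equiv.Perm (Fin (d ^ 2 - 1))),
      embedAt d (d ^ 2 - 1) r (O k) * tens d (d ^ 2 - 1) (O ∘ ⇑π)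
        - tens d (d ^ 2 - 1) (O ∘ ⇑π) * embedAt d (d ^ 2 - 1) r (O k)
      = ∑ m, c (π r) m • tens d (d ^ 2 - 1) (O ∘ Function.update ⇑π r m) := by
    intro r π
    rw [embedAt_eq, tens_mul, tens_mul]
    rw [tens_sub_single _ _ r (fun s hs => by
      simp only [Function.update_of_ne hs, one_mul, mul_one])]
    have h1 : Function.update
        (fun s => Function.update (fun _ => (1 : Matrix (Fin d) (Fin d) ℂ)) r (O k) s
          * (O ∘ ⇑π) s) r
        ((Function.update (fun _ => (1 : Matrix (Fin d) (Fin d) ℂ)) r (O k) r * (O ∘ ⇑π) r)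
          - ((O ∘ ⇑π) r * Function.update (fun _ => (1 : Matrix (Fin d) (Fin d) ℂ)) r (O k) r))
        = Function.update (O ∘ ⇑π) r (O k * O (π r) - O (π r) * O k) := by
      funext s
      by_cases hs : s = r
      · subst hs
        simp only [Function.update_self, Function.comp_apply]
      · simp only [Function.update_of_ne hs, one_mul, Function.comp_apply]
    rw [h1, hc (π r), tens_update_sum]
    refine Finset.sum_congr rfl fun m _ => ?_
    rw [Function.comp_update]
  -- expand everything
  have expand : (∑ r, embedAt d (d ^ 2 - 1) r (O k)) * antisymT d (d ^ 2 - 1) O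
      - antisymT d (d ^ 2 - 1) O * (∑ r, embedAt d (d ^ 2 - 1) r (O k))
      = ∑ r, ∑ π : Equiv.Perm (Fin (d ^ 2 - 1)), ∑ m,
          (((Equiv.Perm.sign π : ℤ) : ℂ) * c (π r) m)
            • tens d (d ^ 2 - 1) (O ∘ Function.update ⇑π r m) := by
    have hsplit : ∀ M : Matrix (Fin (d ^ 2 - 1) → Fin d) (Fin (d ^ 2 - 1) → Fin d) ℂ,
        (∑ r, embedAt d (d ^ 2 - 1) r (O k)) * M - M * (∑ r, embedAt d (d ^ 2 - 1) r (O k))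
        = ∑ r, (embedAt d (d ^ 2 - 1) r (O k) * M - M * embedAt d (d ^ 2 - 1) r (O k)) := by
      intro M
      rw [Finset.sum_mul, Finset.mul_sum, ← Finset.sum_sub_distrib]
    rw [hsplit]
    refine Finset.sum_congr rfl fun r _ => ?_
    rw [antisymT_eq, Finset.mul_sum, Finset.sum_mul, ← Finset.sum_sub_distrib]
    refine Finset.sum_congr rfl fun π _ => ?_
    rw [mul_smul_comm, smul_mul_assoc, ← smul_sub, key r π, Finset.smul_sum]
    refine Finset.sum_congr rfl fun m _ => ?_
    rw [smul_smul]
  rw [expand]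
  -- reindex as a single sum over triples and cancel via an involution
  have reindex : (∑ r, ∑ π : Equiv.Perm (Fin (d ^ 2 - 1)), ∑ m,
        (((Equiv.Perm.sign π : ℤ) : ℂ) * c (π r) m)
          • tens d (d ^ 2 - 1) (O ∘ Function.update ⇑π r m))
      = ∑ x : Equiv.Perm (Fin (d ^ 2 - 1)) × Fin (d ^ 2 - 1) × Fin (d ^ 2 - 1),
          (((Equiv.Perm.sign x.1 : ℤ) : ℂ) * c (x.1 x.2.1) x.2.2)
            • tens d (d ^ 2 - 1) (O ∘ Function.update ⇑x.1 x.2.1 x.2.2) := by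
    rw [Finset.sum_comm]
    simp only [Fintype.sum_prod_type]
  rw [reindex]
  refine Finset.sum_ninvolution
    (fun x => if x.2.2 = x.1 x.2.1 then x
      else (x.1 * Equiv.swap x.2.1 (x.1⁻¹ x.2.2), x.1⁻¹ x.2.2, x.2.2))
    ?_ ?_ (fun a => mem_univ _) ?_
  · rintro ⟨π, r, m⟩
    by_cases hm : m = π r
    · simp only [if_pos hm]
      have hz : c (π r) m = 0 := by rw [hm]; exact hcz (π r)
      rw [hz, mul_zero, zero_smul, add_zero]
    · simp only [if_neg hm]
      have hrr' : π⁻¹ m ≠ r := fun h => hm (by rw [← h, ← Equiv.Perm.mul_apply, mul_inv_cancel, Equiv.Perm.one_apply])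
      have happ : (π * Equiv.swap r (π⁻¹ m)) (π⁻¹ m) = π r := by
        rw [Equiv.Perm.mul_apply, Equiv.swap_apply_right]
      have hupd : Function.update ⇑(π * Equiv.swap r (π⁻¹ m)) (π⁻¹ m) m
          = Function.update ⇑π r m := by
        funext s
        by_cases h1 : s = π⁻¹ m
        · subst h1
          rw [Function.update_self, Function.update_of_ne hrr', ← Equiv.Perm.mul_apply, mul_inv_cancel, Equiv.Perm.one_apply]
        · by_cases h2 : s = r
          · subst h2
            rw [Function.update_of_ne (Ne.symm hrr'), Function.update_self]
            show (π * Equiv.swap s (π⁻¹ m)) s = m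
            rw [Equiv.Perm.mul_apply, Equiv.swap_apply_left, ← Equiv.Perm.mul_apply, mul_inv_cancel, Equiv.Perm.one_apply]
          · rw [Function.update_of_ne h1, Function.update_of_ne h2]
            show (π * Equiv.swap r (π⁻¹ m)) s = π s
            rw [Equiv.Perm.mul_apply, Equiv.swap_apply_of_ne_of_ne h2 h1]
      have hsgn : ((Equiv.Perm.sign (π * Equiv.swap r (π⁻¹ m)) : ℤ) : ℂ)
          = -((Equiv.Perm.sign π : ℤ) : ℂ) := by
        rw [Equiv.Perm.sign_mul, Equiv.Perm.sign_swap (Ne.symm hrr')]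
        simp
      show (((Equiv.Perm.sign π : ℤ) : ℂ) * c (π r) m)
            • tens d (d ^ 2 - 1) (O ∘ Function.update ⇑π r m)
          + (((Equiv.Perm.sign (π * Equiv.swap r (π⁻¹ m)) : ℤ) : ℂ)
              * c ((π * Equiv.swap r (π⁻¹ m)) (π⁻¹ m)) m)
            • tens d (d ^ 2 - 1)
              (O ∘ Function.update ⇑(π * Equiv.swap r (π⁻¹ m)) (π⁻¹ m) m) = 0
      rw [happ, hupd, hsgn, neg_mul, neg_smul, add_neg_cancel]
  · rintro ⟨π, r, m⟩ hF
    by_cases hm : m = π r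
    · exfalso
      apply hF
      have hz : c (π r) m = 0 := by rw [hm]; exact hcz (π r)
      rw [hz, mul_zero, zero_smul]
    · simp only [if_neg hm]
      intro heq
      have hrr' : π⁻¹ m ≠ r := fun h => hm (by rw [← h, ← Equiv.Perm.mul_apply, mul_inv_cancel, Equiv.Perm.one_apply])
      exact hrr' (congrArg (fun x => x.2.1) heq)
  · rintro ⟨π, r, m⟩
    by_cases hm : m = π r
    · simp only [if_pos hm]
    · simp only [if_neg hm]
      have hrr' : π⁻¹ m ≠ r := fun h => hm (by rw [← h, ← Equiv.Perm.mul_apply, mul_inv_cancel, Equiv.Perm.one_apply])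
      have happ : (π * Equiv.swap r (π⁻¹ m)) (π⁻¹ m) = π r := by
        rw [Equiv.Perm.mul_apply, Equiv.swap_apply_right]
      have hcond : ¬ (m = (π * Equiv.swap r (π⁻¹ m)) (π⁻¹ m)) := by
        rw [happ]; exact hm
      rw [if_neg hcond]
      have hinv : (π * Equiv.swap r (π⁻¹ m))⁻¹ m = r := by
        rw [_root_.mul_inv_rev, Equiv.Perm.mul_apply, Equiv.swap_inv, Equiv.swap_apply_right]
      have hswap : Equiv.swap (π⁻¹ m) ((π * Equiv.swap r (π⁻¹ m))⁻¹ m)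
          = Equiv.swap r (π⁻¹ m) := by
        rw [hinv, Equiv.swap_comm]
      refine Prod.ext ?_ (Prod.ext ?_ rfl)
      · show π * Equiv.swap r (π⁻¹ m) * Equiv.swap (π⁻¹ m) ((π * Equiv.swap r (π⁻¹ m))⁻¹ m) = π
        rw [hswap, mul_assoc, Equiv.swap_mul_self, mul_one]
      · exact hinv
end
end

section
/- Let U be the 8×8 unitary on (ℂ²)^⊗3 given by U = Σ_{n,m ∈ {0,1}} X^n Z^m ⊗ |n⟩⟨n| ⊗ |m⟩⟨m|, where X = σ_x and Z = σ_z act on the first (system) qubit and |0⟩,|1⟩ is the computational basis of each ancilla qubit. Then for every 2×2 matrix ρ with Tr ρ = 1: (i) the partial trace over the two ancilla qubits of U (ρ ⊗ I/2 ⊗ I/2) U† equals I/2 (the system is left maximally mixed), and (ii) the partial trace over the system qubit of U (ρ ⊗ I/2 ⊗ I/2) U† equals (I/2) ⊗ (I/2) (the ancillas are also left maximally mixed). -/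
open Matrix Kronecker

noncomputable section

/-- Rank-one projector `|n⟩⟨n|` onto the `n`-th computational basis state of `ℂ²`. -/
def proj (n : Fin 2) : Matrix (Fin 2) (Fin 2) ℂ :=
  Matrix.of fun i j => if i = n ∧ j = n then 1 else 0

/-- The controlled-Pauli unitary `U = Σ_{n,m} Xⁿ Zᵐ ⊗ |n⟩⟨n| ⊗ |m⟩⟨m|` on three qubits. -/
def Udec : Matrix ((Fin 2 × Fin 2) × Fin 2) ((Fin 2 × Fin 2) × Fin 2) ℂ :=
  ∑ n : Fin 2, ∑ m : Fin 2, (σx ^ (n : ℕ) * σz ^ (m : ℕ)) ⊗ₖ proj n ⊗ₖ proj m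

/-- Partial trace over the two ancilla qubits (second and third factors). -/
def ptraceAnc (M : Matrix ((Fin 2 × Fin 2) × Fin 2) ((Fin 2 × Fin 2) × Fin 2) ℂ) :
    Matrix (Fin 2) (Fin 2) ℂ :=
  Matrix.of fun i j => ∑ b : Fin 2, ∑ c : Fin 2, M ((i, b), c) ((j, b), c)

/-- Partial trace over the system qubit (first factor). -/
def ptraceSys (M : Matrix ((Fin 2 × Fin 2) × Fin 2) ((Fin 2 × Fin 2) × Fin 2) ℂ) :
    Matrix (Fin 2 × Fin 2) (Fin 2 × Fin 2) ℂ :=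
  Matrix.of fun p q => ∑ a : Fin 2, M ((a, p.1), p.2) ((a, q.1), q.2)

lemma Udec_apply (i b c j d e : Fin 2) :
    Udec ((i,b),c) ((j,d),e) =
      if b = d ∧ c = e then (σx ^ (b : ℕ) * σz ^ (c : ℕ)) i j else 0 := by
  fin_cases b <;> fin_cases d <;> fin_cases c <;> fin_cases e <;>
    simp [Udec, Matrix.sum_apply, Fin.sum_univ_two, proj]

set_option maxHeartbeats 1000000 in
lemma Udec_prod_apply (ρ : Matrix (Fin 2) (Fin 2) ℂ) (i b c j d e : Fin 2) :
    (Udec * (ρ ⊗ₖ ((2:ℂ)⁻¹ • (1 : Matrix (Fin 2) (Fin 2) ℂ))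
        ⊗ₖ ((2:ℂ)⁻¹ • (1 : Matrix (Fin 2) (Fin 2) ℂ))) * Udecᴴ) ((i,b),c) ((j,d),e)
     = if b = d ∧ c = e then
         (4:ℂ)⁻¹ * ((σx ^ (b:ℕ) * σz ^ (c:ℕ)) * ρ *
           (σx ^ (d:ℕ) * σz ^ (e:ℕ))ᴴ) i j else 0 := by
  fin_cases b <;> fin_cases d <;> fin_cases c <;> fin_cases e <;>
    simp only [Matrix.mul_apply, Matrix.conjTranspose_apply, Fintype.sum_prod_type,
      Udec_apply, Matrix.kroneckerMap_apply, Matrix.smul_apply, Matrix.one_apply,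
      Fin.sum_univ_two] <;>
    simp <;> ring

set_option maxHeartbeats 1000000 in
/-- Applying the controlled-Pauli unitary with two maximally mixed control qubits leaves the
system maximally mixed and also leaves the ancillas maximally mixed. -/
theorem controlled_pauli_decoheres (ρ : Matrix (Fin 2) (Fin 2) ℂ) (hρ : ρ.trace = 1) :
    ptraceAnc (Udec *
        (ρ ⊗ₖ ((2 : ℂ)⁻¹ • (1 : Matrix (Fin 2) (Fin 2) ℂ))
            ⊗ₖ ((2 : ℂ)⁻¹ • (1 : Matrix (Fin 2) (Fin 2) ℂ))) * Udecᴴ) =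
      (2 : ℂ)⁻¹ • (1 : Matrix (Fin 2) (Fin 2) ℂ) ∧
    ptraceSys (Udec *
        (ρ ⊗ₖ ((2 : ℂ)⁻¹ • (1 : Matrix (Fin 2) (Fin 2) ℂ))
            ⊗ₖ ((2 : ℂ)⁻¹ • (1 : Matrix (Fin 2) (Fin 2) ℂ))) * Udecᴴ) =
      ((2 : ℂ)⁻¹ • (1 : Matrix (Fin 2) (Fin 2) ℂ)) ⊗ₖ
        ((2 : ℂ)⁻¹ • (1 : Matrix (Fin 2) (Fin 2) ℂ)) := by
  have htr : ρ 0 0 + ρ 1 1 = 1 := by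
    simpa [Matrix.trace, Matrix.diag, Fin.sum_univ_two] using hρ
  constructor
  · ext i j
    fin_cases i <;> fin_cases j <;>
      simp only [ptraceAnc, Matrix.of_apply, Fin.sum_univ_two, Udec_prod_apply] <;>
      simp [σx, σz, Matrix.mul_apply, Fin.sum_univ_two, Matrix.conjTranspose_apply,
        Matrix.one_apply, Matrix.vecMul, dotProduct] <;>
      linear_combination (2:ℂ)⁻¹ * htr
  · ext p q
    obtain ⟨b, c⟩ := p
    obtain ⟨d, e⟩ := q
    fin_cases b <;> fin_cases c <;> fin_cases d <;> fin_cases e <;>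
      simp only [ptraceSys, Matrix.of_apply, Fin.sum_univ_two, Udec_prod_apply] <;>
      simp [σx, σz, Matrix.mul_apply, Fin.sum_univ_two, Matrix.conjTranspose_apply,
        Matrix.one_apply, Matrix.kroneckerMap_apply, Matrix.smul_apply, Matrix.vecMul, dotProduct] <;>
      linear_combination (4:ℂ)⁻¹ * htr
end
end
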